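/- If r, r', d are positive and small (say all in (0, 1/10)) satisfying the triangle inequalities, and α₀, α_K are the corresponding angles opposite r in the flat plane and on the unit sphere respectively, then sin α₀ and sin α_K are comparable: there exist absolute constants c, C > 0 such that c·sin α₀ ≤ sin α_K ≤ C·sin α₀. -/

import Mathlib

set_option maxHeartbeats 1000000

private lemma sin_bnds {t : ℝ} (h0 : 0 < t) (h1 : t ≤ 1/5) :
    99/100 * t ≤ Real.sin t ∧ Real.sin t ≤ t := by
  constructor
  · have h := Real.sin_gt_sub_cube h0
    nlinarith [mul_nonneg (mul_nonneg h0.le (by linarith : (0:ℝ) ≤ 1/5 - t))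
      (by linarith : (0:ℝ) ≤ 1/5 + t)]
  · exact (Real.sin_lt h0).le

theorem stmt8 :
    ∃ c > 0, ∃ C > 0, ∀ r r' d α₀ αK : ℝ,
      r ∈ Set.Ioo (0 : ℝ) (1 / 10) → r' ∈ Set.Ioo (0 : ℝ) (1 / 10) →
      d ∈ Set.Ioo (0 : ℝ) (1 / 10) → |d - r'| < r → r < d + r' →
      α₀ ∈ Set.Icc 0 Real.pi → αK ∈ Set.Icc 0 Real.pi →
      Real.cos α₀ = (d ^ 2 + r' ^ 2 - r ^ 2) / (2 * d * r') →
      Real.cos αK = (Real.cos r - Real.cos r' * Real.cos d) / (Real.sin r' * Real.sin d) →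
      c * Real.sin α₀ ≤ Real.sin αK ∧ Real.sin αK ≤ C * Real.sin α₀ := by
  refine ⟨1/2, by norm_num, 2, by norm_num, ?_⟩
  intro r r' d α₀ αK hr hr' hd htri1 htri2 ha0 haK hc0 hcK
  obtain ⟨hr0, hr1⟩ := hr
  obtain ⟨hr'0, hr'1⟩ := hr'
  obtain ⟨hd0, hd1⟩ := hd
  obtain ⟨ht1, ht2⟩ := abs_lt.mp htri1
  obtain ⟨a, ha_def⟩ : ∃ a : ℝ, a = (r + r' - d)/2 := ⟨_, rfl⟩
  obtain ⟨b, hb_def⟩ : ∃ b : ℝ, b = (r + d - r')/2 := ⟨_, rfl⟩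
  obtain ⟨e, he_def⟩ : ∃ e : ℝ, e = (d + r' - r)/2 := ⟨_, rfl⟩
  obtain ⟨f, hf_def⟩ : ∃ f : ℝ, f = (r + d + r')/2 := ⟨_, rfl⟩
  have hA : 0 < a := by rw [ha_def]; linarith
  have hB : 0 < b := by rw [hb_def]; linarith
  have hE : 0 < e := by rw [he_def]; linarith
  have hF : 0 < f := by rw [hf_def]; linarith
  have hsa := sin_bnds hA (by rw [ha_def]; linarith)
  have hsb := sin_bnds hB (by rw [hb_def]; linarith)
  have hse := sin_bnds hE (by rw [he_def]; linarith)
  have hsf := sin_bnds hF (by rw [hf_def]; linarith)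
  have hsr' := sin_bnds hr'0 (by linarith)
  have hsd := sin_bnds hd0 (by linarith)
  have hsr'0 : 0 < Real.sin r' := lt_of_lt_of_le (by linarith) hsr'.1
  have hsd0 : 0 < Real.sin d := lt_of_lt_of_le (by linarith) hsd.1
  have hsr'ne : Real.sin r' ≠ 0 := hsr'0.ne'
  have hsdne : Real.sin d ≠ 0 := hsd0.ne'
  have hdne : d ≠ 0 := hd0.ne'
  have hr'ne : r' ≠ 0 := hr'0.ne'
  have hsa0 : 0 ≤ Real.sin a := le_trans (by linarith) hsa.1
  have hsb0 : 0 ≤ Real.sin b := le_trans (by linarith) hsb.1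
  have hse0 : 0 ≤ Real.sin e := le_trans (by linarith) hse.1
  have hsf0 : 0 ≤ Real.sin f := le_trans (by linarith) hsf.1
  obtain ⟨Y, hY_def⟩ : ∃ Y : ℝ, Y = Real.sin r' * Real.sin d := ⟨_, rfl⟩
  have hY0 : 0 < Y := by rw [hY_def]; exact mul_pos hsr'0 hsd0
  obtain ⟨S, hS_def⟩ : ∃ S : ℝ, S = Real.sin a * Real.sin b * Real.sin e * Real.sin f :=
    ⟨_, rfl⟩
  obtain ⟨T, hT_def⟩ : ∃ T : ℝ, T = a * b * e * f := ⟨_, rfl⟩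
  have hT0 : 0 < T := by
    rw [hT_def]; exact mul_pos (mul_pos (mul_pos hA hB) hE) hF
  have hS0 : 0 ≤ S := by
    rw [hS_def]; exact mul_nonneg (mul_nonneg (mul_nonneg hsa0 hsb0) hse0) hsf0
  -- factorization identities for the two cosine differences
  have e1 : Real.cos (d - r') - Real.cos r = 2 * Real.sin b * Real.sin a := by
    rw [Real.cos_sub_cos, show (d - r' - r)/2 = -a by rw [ha_def]; ring,
      Real.sin_neg, show (d - r' + r)/2 = b by rw [hb_def]; ring]
    ring
  have e2 : Real.cos r - Real.cos (d + r') = 2 * Real.sin f * Real.sin e := by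
    rw [Real.cos_sub_cos, show (r - (d + r'))/2 = -e by rw [he_def]; ring,
      Real.sin_neg, show (r + (d + r'))/2 = f by rw [hf_def]; ring]
    ring
  -- key identity on the sphere
  have key : Real.sin αK ^ 2 * Y ^ 2 = 4 * S := by
    have h1 : Real.sin αK ^ 2 * Y ^ 2
        = (Real.cos (d - r') - Real.cos r) * (Real.cos r - Real.cos (d + r')) := by
      rw [Real.sin_sq, hcK, Real.cos_sub, Real.cos_add, hY_def]
      field_simp
      ring
    rw [h1, e1, e2, hS_def]; ring
  -- key identity in the plane
  have key0 : Real.sin α₀ ^ 2 * (2 * d * r') ^ 2 = 16 * T := by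
    rw [Real.sin_sq, hc0, hT_def, ha_def, hb_def, he_def, hf_def]
    field_simp
    ring
  -- comparison of S and T
  have hS_ub : S ≤ T := by
    have h1 : Real.sin a * Real.sin b ≤ a * b :=
      mul_le_mul hsa.2 hsb.2 hsb0 hA.le
    have h2 : Real.sin e * Real.sin f ≤ e * f :=
      mul_le_mul hse.2 hsf.2 hsf0 hE.le
    calc S = (Real.sin a * Real.sin b) * (Real.sin e * Real.sin f) := by rw [hS_def]; ring
      _ ≤ (a * b) * (e * f) :=
          mul_le_mul h1 h2 (mul_nonneg hse0 hsf0) (mul_nonneg hA.le hB.le)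
      _ = T := by rw [hT_def]; ring
  have hS_lb : 96/100 * T ≤ S := by
    have h1 : (99/100*a) * (99/100*b) ≤ Real.sin a * Real.sin b :=
      mul_le_mul hsa.1 hsb.1 (by linarith) hsa0
    have h2 : (99/100*e) * (99/100*f) ≤ Real.sin e * Real.sin f :=
      mul_le_mul hse.1 hsf.1 (by linarith) hse0
    have h3 : ((99/100*a) * (99/100*b)) * ((99/100*e) * (99/100*f))
        ≤ (Real.sin a * Real.sin b) * (Real.sin e * Real.sin f) :=
      mul_le_mul h1 h2 (mul_nonneg (by linarith) (by linarith)) (mul_nonneg hsa0 hsb0)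
    have heq : ((99/100*a) * (99/100*b)) * ((99/100*e) * (99/100*f))
        = 96059601/100000000 * (a*b*e*f) := by ring
    have habef : 0 ≤ a*b*e*f := by rw [← hT_def]; exact hT0.le
    have hSeq : S = (Real.sin a * Real.sin b) * (Real.sin e * Real.sin f) := by
      rw [hS_def]; ring
    rw [hT_def]
    linarith [h3, heq, habef, hSeq]
  -- comparison of Y and r' * d
  have hY_ub : Y ≤ r' * d := by
    rw [hY_def]
    exact mul_le_mul hsr'.2 hsd.2 hsd0.le hr'0.le
  have hY_lb : 99/100 * r' * (99/100 * d) ≤ Y := by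
    rw [hY_def]
    exact mul_le_mul hsr'.1 hsd.1 (by linarith) hsr'0.le
  have hY2_lb : 96/100 * (r' * d)^2 ≤ Y^2 := by
    have h1 := pow_le_pow_left₀ (mul_nonneg (by linarith) (by linarith)) hY_lb 2
    have h2 : (99/100 * r' * (99/100 * d))^2 = 96059601/100000000 * (r' * d)^2 := by ring
    linarith [h1, h2, sq_nonneg (r' * d)]
  have hY2_ub : Y^2 ≤ (r' * d)^2 := pow_le_pow_left₀ hY0.le hY_ub 2
  have hK0 : (0:ℝ) < Y^2 * (2*d*r')^2 := by
    have h2dr : (0:ℝ) < 2*d*r' := by positivity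
    exact mul_pos (pow_pos hY0 2) (pow_pos h2dr 2)
  have hsinαK0 : 0 ≤ Real.sin αK := Real.sin_nonneg_of_nonneg_of_le_pi haK.1 haK.2
  have hsinα00 : 0 ≤ Real.sin α₀ := Real.sin_nonneg_of_nonneg_of_le_pi ha0.1 ha0.2
  constructor
  · -- lower bound : (1/2) sin α₀ ≤ sin αK
    have hsq : Real.sin α₀ ^ 2 ≤ (2 * Real.sin αK) ^ 2 := by
      have main : Real.sin α₀ ^ 2 * (Y^2 * (2*d*r')^2)
          ≤ (2 * Real.sin αK) ^ 2 * (Y^2 * (2*d*r')^2) := by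
        have l1 : Real.sin α₀ ^ 2 * (Y^2 * (2*d*r')^2) = 16 * T * Y^2 := by
          rw [show Real.sin α₀ ^ 2 * (Y^2 * (2*d*r')^2)
              = (Real.sin α₀ ^ 2 * (2*d*r')^2) * Y^2 by ring, key0]
        have l2 : (2 * Real.sin αK) ^ 2 * (Y^2 * (2*d*r')^2) = 4 * (4*S) * (2*d*r')^2 := by
          rw [show (2 * Real.sin αK) ^ 2 * (Y^2 * (2*d*r')^2)
              = 4 * (Real.sin αK ^ 2 * Y^2) * (2*d*r')^2 by ring, key]
        rw [l1, l2]
        calc 16 * T * Y^2 ≤ 16 * T * (r'*d)^2 :=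
              mul_le_mul_of_nonneg_left hY2_ub (by linarith)
          _ ≤ (64 * (96/100) * T) * (r'*d)^2 :=
              mul_le_mul_of_nonneg_right (by linarith) (sq_nonneg (r'*d))
          _ = 64 * (96/100 * T) * (r'*d)^2 := by ring
          _ ≤ 64 * S * (r'*d)^2 :=
              mul_le_mul_of_nonneg_right (by linarith) (sq_nonneg (r'*d))
          _ = 4 * (4*S) * (2*d*r')^2 := by ring
      exact le_of_mul_le_mul_right main hK0
    have h := Real.sqrt_le_sqrt hsq
    rw [Real.sqrt_sq hsinα00, Real.sqrt_sq (by linarith)] at h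
    linarith
  · -- upper bound : sin αK ≤ 2 sin α₀
    have hsq : Real.sin αK ^ 2 ≤ (2 * Real.sin α₀) ^ 2 := by
      have main : Real.sin αK ^ 2 * (Y^2 * (2*d*r')^2)
          ≤ (2 * Real.sin α₀) ^ 2 * (Y^2 * (2*d*r')^2) := by
        have l1 : Real.sin αK ^ 2 * (Y^2 * (2*d*r')^2) = 4 * S * (2*d*r')^2 := by
          rw [show Real.sin αK ^ 2 * (Y^2 * (2*d*r')^2)
              = (Real.sin αK ^ 2 * Y^2) * (2*d*r')^2 by ring, key]
        have l2 : (2 * Real.sin α₀) ^ 2 * (Y^2 * (2*d*r')^2) = 4 * (16*T) * Y^2 := by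
          rw [show (2 * Real.sin α₀) ^ 2 * (Y^2 * (2*d*r')^2)
              = 4 * (Real.sin α₀ ^ 2 * (2*d*r')^2) * Y^2 by ring, key0]
        rw [l1, l2]
        calc 4 * S * (2*d*r')^2 = (16 * S) * (d*r')^2 := by ring
          _ ≤ (16 * T) * (d*r')^2 :=
              mul_le_mul_of_nonneg_right (by linarith) (sq_nonneg (d*r'))
          _ ≤ (64 * (96/100) * T) * (d*r')^2 :=
              mul_le_mul_of_nonneg_right (by linarith) (sq_nonneg (d*r'))
          _ = (64 * T) * (96/100 * (r'*d)^2) := by ring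
          _ ≤ (64 * T) * Y^2 :=
              mul_le_mul_of_nonneg_left hY2_lb (by linarith)
          _ = 4 * (16*T) * Y^2 := by ring
      exact le_of_mul_le_mul_right main hK0
    have h := Real.sqrt_le_sqrt hsq
    rw [Real.sqrt_sq hsinαK0, Real.sqrt_sq (by linarith)] at h
    linarith
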